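/- Let (γ, ℓ, ℓ⁽²⁾) be metric hypersurface data on a finite-dimensional real vector space V with contravariant data (P, n, n⁽²⁾), and let z ∈ ℝ \ {0}, ζ ∈ V. Let (γ, ℓ′, ℓ′⁽²⁾) be the gauge-transformed data with parameters (z, ζ). Then (γ, ℓ′, ℓ′⁽²⁾) is again metric hypersurface data, and its contravariant data (P′, n′, n′⁽²⁾) is given by: P′(α,β) = P(α,β) + n⁽²⁾·α(ζ)β(ζ) − α(ζ)β(n) − β(ζ)α(n) for all α, β ∈ V*; n′ = z⁻¹(n − n⁽²⁾ζ); and n′⁽²⁾ = z⁻²n⁽²⁾. -/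

import Mathlib

/-- Let `(γ, ℓ, ℓ2)` be metric hypersurface data with contravariant data
`(P, n, n2)`, and let `z ≠ 0`, `ζ ∈ V`.  Then the gauge-transformed data
`(γ, ℓ′, ℓ′⁽²⁾) = (γ, z(ℓ + γ(ζ,·)), z²(ℓ2 + 2ℓ(ζ) + γ(ζ,ζ)))` is again metric hypersurface
data, and its contravariant data `(P′, n′, n′⁽²⁾)` is given by
`P′(α,β) = P(α,β) + n2·α(ζ)β(ζ) − α(ζ)β(n) − β(ζ)α(n)`, `n′ = z⁻¹(n − n2·ζ)` and
`n′⁽²⁾ = z⁻²·n2`. -/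
theorem stmt_11 {V : Type*} [AddCommGroup V] [Module ℝ V] [FiniteDimensional ℝ V]
    (γ : V →ₗ[ℝ] V →ₗ[ℝ] ℝ) (ℓ : Module.Dual ℝ V) (ℓ2 : ℝ)
    (hγsymm : ∀ x y : V, γ x y = γ y x)
    (hnondeg : ∀ (W : V) (a : ℝ),
      (∀ (Z : V) (b : ℝ), γ W Z + a * ℓ Z + b * ℓ W + a * b * ℓ2 = 0) → W = 0 ∧ a = 0)
    (P : Module.Dual ℝ V →ₗ[ℝ] Module.Dual ℝ V →ₗ[ℝ] ℝ) (n : V) (n2 : ℝ)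
    (hPsymm : ∀ α β : Module.Dual ℝ V, P α β = P β α)
    (h1 : ∀ v : V, γ n v + n2 * ℓ v = 0)
    (h2 : ℓ n + n2 * ℓ2 = 1)
    (h3 : ∀ α : Module.Dual ℝ V, P α ℓ + ℓ2 * α n = 0)
    (h4 : ∀ (α : Module.Dual ℝ V) (v : V), P α (γ v) + α n * ℓ v = α v)
    (z : ℝ) (hz : z ≠ 0) (ζ : V) :
    -- the transformed data is again metric hypersurface data
    (∀ (W : V) (a : ℝ),
      (∀ (Z : V) (b : ℝ),
        γ W Z + a * (z • (ℓ + γ ζ)) Z + b * (z • (ℓ + γ ζ)) W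
          + a * b * (z ^ 2 * (ℓ2 + 2 * ℓ ζ + γ ζ ζ)) = 0) → W = 0 ∧ a = 0) ∧
    -- its contravariant data is (P′, n′, n′⁽²⁾) as in the statement
    (∀ P' : Module.Dual ℝ V →ₗ[ℝ] Module.Dual ℝ V →ₗ[ℝ] ℝ,
      (∀ α β : Module.Dual ℝ V,
        P' α β = P α β + n2 * (α ζ * β ζ) - α ζ * β n - β ζ * α n) →
      (∀ α β : Module.Dual ℝ V, P' α β = P' β α) ∧
      (∀ v : V, γ (z⁻¹ • (n - n2 • ζ)) v + (z⁻¹ ^ 2 * n2) * (z • (ℓ + γ ζ)) v = 0) ∧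
      ((z • (ℓ + γ ζ)) (z⁻¹ • (n - n2 • ζ))
          + (z⁻¹ ^ 2 * n2) * (z ^ 2 * (ℓ2 + 2 * ℓ ζ + γ ζ ζ)) = 1) ∧
      (∀ α : Module.Dual ℝ V,
        P' α (z • (ℓ + γ ζ))
          + (z ^ 2 * (ℓ2 + 2 * ℓ ζ + γ ζ ζ)) * α (z⁻¹ • (n - n2 • ζ)) = 0) ∧
      (∀ (α : Module.Dual ℝ V) (v : V),
        P' α (γ v) + α (z⁻¹ • (n - n2 • ζ)) * (z • (ℓ + γ ζ)) v = α v)) := by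
  constructor
  · intro W a h
    have F1 : ∀ Z : V, γ W Z + a * z * (ℓ Z + γ ζ Z) = 0 := by
      intro Z
      have := h Z 0
      simp only [LinearMap.smul_apply, LinearMap.add_apply, smul_eq_mul] at this
      linarith [this]
    have F2 : ℓ W + γ ζ W + a * z * (ℓ2 + 2 * ℓ ζ + γ ζ ζ) = 0 := by
      have hb := h 0 1
      have h0 := h 0 0
      simp only [LinearMap.smul_apply, LinearMap.add_apply, smul_eq_mul, map_zero] at hb h0
      have hmul : (ℓ W + γ ζ W + a * z * (ℓ2 + 2 * ℓ ζ + γ ζ ζ)) * z = 0 := by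
        linear_combination hb - h0
      exact (mul_eq_zero.mp hmul).resolve_right hz
    have F3 : ℓ W + a * z * ℓ ζ + a * z * ℓ2 = 0 := by
      linear_combination F2 - F1 ζ - hγsymm ζ W
    have key := hnondeg (W + (a*z) • ζ) (a*z) (by
      intro Z b
      simp only [map_add, map_smul, LinearMap.add_apply, LinearMap.smul_apply, smul_eq_mul]
      linear_combination F1 Z + b * F3)
    have ha : a = 0 := by
      rcases mul_eq_zero.mp key.2 with h' | h'
      · exact h'
      · exact absurd h' hz
    refine ⟨?_, ha⟩
    have := key.1
    rw [ha] at this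
    simpa using this
  · intro P' hP'
    refine ⟨?_, ?_, ?_, ?_, ?_⟩
    · intro α β
      rw [hP' α β, hP' β α, hPsymm α β]; ring
    · intro v
      simp only [map_smul, map_sub, LinearMap.smul_apply, LinearMap.sub_apply,
        LinearMap.add_apply, smul_eq_mul]
      field_simp
      linear_combination h1 v
    · simp only [map_smul, map_sub, LinearMap.smul_apply, LinearMap.sub_apply,
        LinearMap.add_apply, smul_eq_mul, map_smul]
      field_simp
      linear_combination h2 + hγsymm ζ n + h1 ζ
    · intro α
      simp only [map_add, map_smul, map_sub, LinearMap.smul_apply, LinearMap.add_apply,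
        smul_eq_mul]
      rw [hP' α ℓ, hP' α (γ ζ)]
      field_simp
      linear_combination z * h3 α + z * h4 α ζ - z * α ζ * h2
        - z * α ζ * hγsymm ζ n - z * α ζ * h1 ζ
    · intro α v
      simp only [map_smul, map_sub, LinearMap.smul_apply, LinearMap.add_apply,
        smul_eq_mul]
      rw [hP' α (γ v)]
      field_simp
      linear_combination h4 α v + (α n - n2 * α ζ) * hγsymm ζ v
        + α ζ * hγsymm n v - α ζ * h1 v
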